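/- Let B be a Banach space and Â : B → B a compact linear operator. Set A = I − Â. Then there exists a positive integer n₀ such that ker(A^{n₀+1}) = ker(A^{n₀}). -/

import Mathlib

/-- Riesz-lemma step: given closed `F ≤ G` with `G \ F` nonempty, find a unit vector
in `G` at distance at least `1/2` from `F`. -/
lemma riesz_step {B : Type*} [NormedAddCommGroup B] [NormedSpace ℂ B]
    (F G : Submodule ℂ B) (hFG : F ≤ G) (hF : IsClosed (F : Set B))
    (hne : ∃ x, x ∈ G ∧ x ∉ F) :
    ∃ v : B, v ∈ G ∧ ‖v‖ = 1 ∧ ∀ z ∈ F, (1:ℝ)/2 ≤ ‖v - z‖ := by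
  set F' : Submodule ℂ G := F.comap G.subtype with hF'
  have hF'c : IsClosed (F' : Set G) := hF.preimage continuous_subtype_val
  have hF'ne : ∃ x : G, x ∉ F' := by
    obtain ⟨x, hxG, hxF⟩ := hne
    exact ⟨⟨x, hxG⟩, hxF⟩
  obtain ⟨x₀, hx₀, hx₀d⟩ := riesz_lemma (𝕜 := ℂ) hF'c hF'ne (r := 1/2) (by norm_num)
  have hx₀ne : (x₀ : B) ≠ 0 := by
    intro h
    apply hx₀
    have hz : x₀ = 0 := Subtype.ext h
    rw [hz]; exact F'.zero_mem
  have hn : ‖(x₀ : B)‖ ≠ 0 := norm_ne_zero_iff.mpr hx₀ne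
  have hnpos : (0:ℝ) < ‖(x₀ : B)‖ := lt_of_le_of_ne (norm_nonneg _) (Ne.symm hn)
  refine ⟨((‖(x₀ : B)‖ : ℂ))⁻¹ • (x₀ : B), G.smul_mem _ x₀.2, ?_, ?_⟩
  · rw [norm_smul]
    simp [hn, Complex.norm_real]
  · intro z hz
    have hyF' : ((‖(x₀ : B)‖ : ℂ)) • z ∈ F := F.smul_mem _ hz
    have hyG : ((‖(x₀ : B)‖ : ℂ)) • z ∈ G := by
      exact G.smul_mem _ (hFG hz)
    have key := hx₀d ⟨((‖(x₀ : B)‖ : ℂ)) • z, hyG⟩ hyF'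
    have hkey : (1/2 : ℝ) * ‖(x₀ : B)‖ ≤ ‖(x₀ : B) - (‖(x₀ : B)‖ : ℂ) • z‖ := by
      simpa using key
    have heq : ((‖(x₀ : B)‖ : ℂ))⁻¹ • (x₀ : B) - z
        = ((‖(x₀ : B)‖ : ℂ))⁻¹ • ((x₀ : B) - (‖(x₀ : B)‖ : ℂ) • z) := by
      rw [smul_sub, smul_smul, inv_mul_cancel₀ (by exact_mod_cast hn), one_smul]
    rw [heq, norm_smul]
    have : ‖((‖(x₀ : B)‖ : ℂ))⁻¹‖ = (‖(x₀ : B)‖)⁻¹ := by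
      simp
    rw [this]
    calc (1:ℝ)/2 = ‖(x₀:B)‖⁻¹ * ((1/2) * ‖(x₀:B)‖) := by field_simp
    _ ≤ ‖(x₀:B)‖⁻¹ * ‖(x₀ : B) - (‖(x₀ : B)‖ : ℂ) • z‖ :=
        mul_le_mul_of_nonneg_left hkey (inv_nonneg.mpr (norm_nonneg _))

/-- Let `B` be a Banach space and `Â : B → B` a compact continuous linear operator.
Set `A = I − Â`. Then there exists a positive integer `n₀` such that
`ker (A ^ (n₀+1)) = ker (A ^ n₀)`. -/
theorem stmt0 (B : Type*) [NormedAddCommGroup B] [NormedSpace ℂ B] [CompleteSpace B]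
    (Ahat : B →L[ℂ] B) (hAhat : IsCompactOperator Ahat) :
    ∃ n₀ : ℕ, 0 < n₀ ∧
      LinearMap.ker (((1 - Ahat) ^ (n₀ + 1) : B →L[ℂ] B) : B →ₗ[ℂ] B) = LinearMap.ker (((1 - Ahat) ^ n₀ : B →L[ℂ] B) : B →ₗ[ℂ] B) := by
  by_contra hcon
  push_neg at hcon
  set A : B →L[ℂ] B := 1 - Ahat with hA
  -- monotonicity of kernels
  have hmono : Monotone (fun n : ℕ => LinearMap.ker ((A ^ n : B →L[ℂ] B) : B →ₗ[ℂ] B)) := by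
    apply monotone_nat_of_le_succ
    intro n x hx
    simp only [LinearMap.mem_ker, ContinuousLinearMap.coe_coe] at hx ⊢
    rw [pow_succ', ContinuousLinearMap.mul_apply, hx, map_zero]
  -- strictness
  have hstrict : ∀ n : ℕ, ∃ x, x ∈ LinearMap.ker ((A ^ (n+2) : B →L[ℂ] B) : B →ₗ[ℂ] B) ∧ x ∉ LinearMap.ker ((A ^ (n+1) : B →L[ℂ] B) : B →ₗ[ℂ] B) := by
    intro n
    have hne := hcon (n+1) (Nat.succ_pos n)
    have hle := hmono (Nat.le_succ (n+1))
    by_contra hc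
    push_neg at hc
    exact hne (le_antisymm (fun x hx => hc x hx) hle)
  -- closedness
  have hclosed : ∀ n : ℕ, IsClosed ((LinearMap.ker ((A ^ n : B →L[ℂ] B) : B →ₗ[ℂ] B) : Submodule ℂ B) : Set B) := by
    intro n
    have hset : ((LinearMap.ker ((A ^ n : B →L[ℂ] B) : B →ₗ[ℂ] B) : Submodule ℂ B) : Set B) = (A ^ n) ⁻¹' {0} := by
      ext x; simp only [SetLike.mem_coe, LinearMap.mem_ker, ContinuousLinearMap.coe_coe, Set.mem_preimage, Set.mem_singleton_iff]
    rw [hset]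
    exact isClosed_singleton.preimage (A ^ n).continuous
  -- choose sequence
  have hv : ∀ n : ℕ, ∃ v : B, v ∈ LinearMap.ker ((A ^ (n+2) : B →L[ℂ] B) : B →ₗ[ℂ] B) ∧ ‖v‖ = 1 ∧
      ∀ z ∈ LinearMap.ker ((A ^ (n+1) : B →L[ℂ] B) : B →ₗ[ℂ] B), (1:ℝ)/2 ≤ ‖v - z‖ := by
    intro n
    exact riesz_step _ _ (hmono (by omega)) (hclosed (n+1)) (hstrict n)
  choose v hvmem hvnorm hvdist using hv
  -- key separation
  have hkey : ∀ m n : ℕ, m < n → (1:ℝ)/2 ≤ ‖Ahat (v n) - Ahat (v m)‖ := by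
    intro m n hmn
    have hAhateq : ∀ x : B, Ahat x = x - A x := by
      intro x
      simp [hA]
    have hz1 : A (v n) ∈ LinearMap.ker ((A ^ (n+1) : B →L[ℂ] B) : B →ₗ[ℂ] B) := by
      simp only [LinearMap.mem_ker, ContinuousLinearMap.coe_coe]
      have := hvmem n
      simp only [LinearMap.mem_ker, ContinuousLinearMap.coe_coe] at this
      rw [← ContinuousLinearMap.mul_apply, ← pow_succ]
      exact this
    have hz2 : v m ∈ LinearMap.ker ((A ^ (n+1) : B →L[ℂ] B) : B →ₗ[ℂ] B) := by
      exact hmono (by omega) (hvmem m)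
    have hz3 : A (v m) ∈ LinearMap.ker ((A ^ (n+1) : B →L[ℂ] B) : B →ₗ[ℂ] B) := by
      apply hmono (show m+1 ≤ n+1 by omega)
      simp only [LinearMap.mem_ker]
      have := hvmem m
      simp only [LinearMap.mem_ker, ContinuousLinearMap.coe_coe] at this ⊢
      rw [← ContinuousLinearMap.mul_apply, ← pow_succ]
      exact this
    have hzmem : A (v n) + (v m - A (v m)) ∈ LinearMap.ker ((A ^ (n+1) : B →L[ℂ] B) : B →ₗ[ℂ] B) :=
      Submodule.add_mem _ hz1 (Submodule.sub_mem _ hz2 hz3)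
    have := hvdist n _ hzmem
    have heq : v n - (A (v n) + (v m - A (v m))) = Ahat (v n) - Ahat (v m) := by
      rw [hAhateq, hAhateq]
      abel
    rwa [heq] at this
  -- compactness contradiction
  have hK : ∃ K : Set B, IsCompact K ∧ ⇑Ahat '' Metric.closedBall 0 1 ⊆ K := by
    exact IsCompactOperator.image_closedBall_subset_compact (𝕜₁ := ℂ)
      (f := (Ahat : B →ₗ[ℂ] B)) hAhat 1
  obtain ⟨K, hKc, hKsub⟩ := hK
  have hmemK : ∀ n : ℕ, Ahat (v n) ∈ K := by
    intro n
    apply hKsub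
    exact ⟨v n, by simp [hvnorm n], rfl⟩
  obtain ⟨a, _, φ, hφ, hconv⟩ := hKc.tendsto_subseq hmemK
  have hcauchy := hconv.cauchySeq
  rw [Metric.cauchySeq_iff] at hcauchy
  obtain ⟨N, hN⟩ := hcauchy ((1:ℝ)/2) (by norm_num)
  have h1 := hN (N+1) (by omega) N (by omega)
  have h2 := hkey (φ N) (φ (N+1)) (hφ (by omega))
  rw [Function.comp_apply, Function.comp_apply, dist_eq_norm] at h1
  linarith
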